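/- Let G be a finite undirected simple graph whose girth is strictly greater than 2k for some k ≥ 1, and let v, w be vertices with graph distance dist(v, w) = k. Then the number of non-backtracking walks of length k from v to w equals 1. -/

import Mathlib

open Finset

/-- A walk is non-backtracking if it never immediately reverses an edge,
i.e. `v_{i+2} ≠ v_i` for all applicable `i`. -/
def SimpleGraph.Walk.IsNonBacktracking {V : Type*} {G : SimpleGraph V} {u v : V}
    (p : G.Walk u v) : Prop :=
  ∀ i : ℕ, i + 2 ≤ p.length → p.getVert (i + 2) ≠ p.getVert i

namespace SimpleGraph

variable {V : Type*} {G : SimpleGraph V}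

lemma Walk.getVert_eq_support_getElem' {u v : V} (p : G.Walk u v) {i : ℕ}
    (hi : i ≤ p.length) : p.getVert i = p.support[i]'(by simp; omega) := by
  induction p generalizing i with
  | nil =>
    simp only [Walk.length_nil, Nat.le_zero] at hi
    subst hi
    simp [Walk.getVert]
  | cons h q ih =>
    cases i with
    | zero => simp [Walk.getVert]
    | succ n =>
      simp only [Walk.getVert_cons_succ, Walk.support_cons, List.getElem_cons_succ]
      exact ih (by simpa using hi)

lemma Walk.IsPath.getVert_injective {u v : V} {p : G.Walk u v} (hp : p.IsPath)
    {i j : ℕ} (hi : i ≤ p.length) (hj : j ≤ p.length) (h : p.getVert i = p.getVert j) :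
    i = j := by
  rw [p.getVert_eq_support_getElem' hi, p.getVert_eq_support_getElem' hj] at h
  exact (List.Nodup.getElem_inj_iff hp.support_nodup).mp h

lemma egirth_le_of_cycle {a : V} {c : G.Walk a a} (hc : c.IsCycle) :
    G.egirth ≤ c.length := by
  rw [egirth]
  exact iInf_le_of_le a (iInf_le_of_le c (iInf_le _ hc))

end SimpleGraph

/-- In a graph of girth greater than `2k`, two vertices at distance exactly `k`
are joined by a unique non-backtracking walk of length `k`. -/
theorem unique_nonBacktracking_walk_of_high_girth
    {V : Type*} [Fintype V] [DecidableEq V]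
    (G : SimpleGraph V) [DecidableRel G.Adj]
    (k : ℕ) (hk : 1 ≤ k)
    (hgirth : (2 * k : ℕ∞) < G.girth)
    (v w : V) (hdist : G.dist v w = k) :
    Nat.card {p : G.Walk v w // p.length = k ∧ p.IsNonBacktracking} = 1 := by
  -- any cycle in G has length > 2 * k
  have hcyc : ∀ ⦃a : V⦄ (c : G.Walk a a), c.IsCycle → ¬ (c.length ≤ 2 * k) := by
    intro a c hc hlen
    have h1 : G.egirth ≤ (2 * k : ℕ) := le_trans (SimpleGraph.egirth_le_of_cycle hc)
      (by exact_mod_cast hlen)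
    have h2 : G.egirth ≠ ⊤ := ne_top_of_le_ne_top (ENat.coe_ne_top _) h1
    have h3 : (G.girth : ℕ∞) = G.egirth := by
      rw [SimpleGraph.girth, ENat.coe_toNat h2]
    rw [h3] at hgirth
    exact absurd (lt_of_le_of_lt h1 (by exact_mod_cast hgirth)) (lt_irrefl _)
  -- every walk of length k from v to w is a path
  have hpath : ∀ p : G.Walk v w, p.length = k → p.IsPath := fun p hp =>
    p.isPath_of_length_eq_dist (by rw [hp, hdist])
  -- existence
  have hreach : G.Reachable v w :=
    SimpleGraph.Reachable.of_dist_ne_zero (by omega)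
  obtain ⟨p₀, hp₀len⟩ := hreach.exists_walk_length_eq_dist
  have hp₀k : p₀.length = k := by rw [hp₀len, hdist]
  have hNB : ∀ p : G.Walk v w, p.length = k → p.IsNonBacktracking := by
    intro p hpk i hi h
    have := (hpath p hpk).getVert_injective (hi) (by omega) h
    omega
  have hne : Nonempty {p : G.Walk v w // p.length = k ∧ p.IsNonBacktracking} :=
    ⟨⟨p₀, hp₀k, hNB p₀ hp₀k⟩⟩
  -- uniqueness
  have hsub : Subsingleton {p : G.Walk v w // p.length = k ∧ p.IsNonBacktracking} := by
    constructor
    rintro ⟨p, hpk, -⟩ ⟨q, hqk, -⟩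
    ext1
    dsimp only
    have hpP := hpath p hpk
    have hqP := hpath q hqk
    -- consider the subgraph consisting of the edges of p and q
    set S : Set (Sym2 V) := {e | e ∈ p.edges ∨ e ∈ q.edges} with hS
    set H : SimpleGraph V := SimpleGraph.fromEdgeSet S with hH
    have hHsub : ∀ e ∈ S, e ∈ G.edgeSet := by
      rintro e (he | he)
      · exact p.edges_subset_edgeSet he
      · exact q.edges_subset_edgeSet he
    have hpe : ∀ e ∈ p.edges, e ∈ H.edgeSet := by
      intro e he
      rw [hH, SimpleGraph.edgeSet_fromEdgeSet]
      exact ⟨Or.inl he, G.not_isDiag_of_mem_edgeSet (p.edges_subset_edgeSet he)⟩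
    have hqe : ∀ e ∈ q.edges, e ∈ H.edgeSet := by
      intro e he
      rw [hH, SimpleGraph.edgeSet_fromEdgeSet]
      exact ⟨Or.inr he, G.not_isDiag_of_mem_edgeSet (q.edges_subset_edgeSet he)⟩
    have hHG : ∀ e ∈ H.edgeSet, e ∈ G.edgeSet := by
      intro e he
      rw [hH, SimpleGraph.edgeSet_fromEdgeSet] at he
      exact hHsub e he.1
    -- H is acyclic, since any cycle in H would be a short cycle in G
    have hAcyc : H.IsAcyclic := by
      intro a c hc
      -- transfer the cycle to G
      have hce : ∀ e ∈ c.edges, e ∈ G.edgeSet := fun e he =>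
        hHG e (c.edges_subset_edgeSet he)
      have hc' : (c.transfer G hce).IsCycle := hc.transfer hce
      apply hcyc _ hc'
      rw [SimpleGraph.Walk.length_transfer]
      -- c.length = c.edges.length ≤ (p.edges ++ q.edges).length = 2 * k
      have hnodup : c.edges.Nodup := hc.edges_nodup
      have hsubset : c.edges ⊆ p.edges ++ q.edges := by
        intro e he
        have := c.edges_subset_edgeSet he
        rw [hH, SimpleGraph.edgeSet_fromEdgeSet] at this
        rcases this.1 with h | h
        · exact List.mem_append_left _ h
        · exact List.mem_append_right _ h
      have := (hnodup.subperm hsubset).length_le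
      simp only [List.length_append, SimpleGraph.Walk.length_edges] at this
      omega
    -- transfer p and q to H; they are equal by uniqueness of paths in acyclic graphs
    have hp' : (p.transfer H hpe).IsPath := hpP.transfer hpe
    have hq' : (q.transfer H hqe).IsPath := hqP.transfer hqe
    have heq : (⟨p.transfer H hpe, hp'⟩ : H.Path v w) = ⟨q.transfer H hqe, hq'⟩ :=
      SimpleGraph.isAcyclic_iff_path_unique.mp hAcyc _ _
    have heq' : p.transfer H hpe = q.transfer H hqe := congrArg Subtype.val heq
    have hback : ∀ e ∈ (p.transfer H hpe).edges, e ∈ G.edgeSet := by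
      intro e he
      rw [SimpleGraph.Walk.edges_transfer] at he
      exact p.edges_subset_edgeSet he
    calc p = (p.transfer H hpe).transfer G hback := by
            rw [SimpleGraph.Walk.transfer_transfer, SimpleGraph.Walk.transfer_self]
      _ = (q.transfer H hqe).transfer G (heq' ▸ hback) := by
            congr 1
      _ = q := by
            rw [SimpleGraph.Walk.transfer_transfer, SimpleGraph.Walk.transfer_self]
  rw [Nat.card_eq_one_iff_unique]
  exact ⟨hsub, hne⟩
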